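/- If A is a noetherian commutative ring, then every finite sequence of elements of A is weakly proregular. -/

import Mathlib

/-!
We use an explicit model for the Koszul complex `K(A; aa)` of a finite sequence
`aa = (a_1, ..., a_n)` in a commutative ring `A`: the degree `-q` component is the
free module of functions on the `q`-element subsets of `Fin n` (corresponding to the
basis of `Λ^q(A^n)`), and the differential is contraction against `aa` with the usual
signs.  The transition map `μ_{j,i} : K(A; aa^j) → K(A; aa^i)` multiplies the
component indexed by a subset `s` by `∏_{k ∈ s} a_k^(j-i)`.

A sequence is weakly proregular if for every `q < 0` the inverse system
`{H^q(K(A; aa^i))}` is pro-zero: for every `i` there is `j ≥ i` such that the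
transition map `H^q(K(A; aa^j)) → H^q(K(A; aa^i))` is zero, i.e. every degree `-q`
cocycle at level `j` is sent by `μ_{j,i}` to a coboundary at level `i`.
-/

/-- The degree `-q` component of the Koszul complex on `n` elements. -/
abbrev KoszulDeg (A : Type*) (n q : ℕ) : Type _ :=
  {s : Finset (Fin n) // s.card = q} → A

/-- The Koszul differential `K(A; aa)^{-(q+1)} → K(A; aa)^{-q}`, given by contraction
against the sequence `aa`, with the usual signs. -/
noncomputable def koszulD {A : Type*} [CommRing A] {n : ℕ} (aa : Fin n → A) (q : ℕ)
    (f : KoszulDeg A n (q + 1)) : KoszulDeg A n q :=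
  fun s => ∑ i ∈ (s.val)ᶜ.attach,
    (-1 : A) ^ (s.val.filter (fun k => k < i.val)).card * aa i.val *
      f ⟨insert i.val s.val, by
        rw [Finset.card_insert_of_notMem (Finset.mem_compl.mp i.property), s.property]⟩

/-- The transition map `μ_{j,i}` of the inverse system of Koszul complexes, in degree
`-q`, for exponents `j ≥ i` with `e = j - i`: multiplication by `∏_{k ∈ s} a_k^e` on
the component indexed by the subset `s`. -/
noncomputable def koszulTransition {A : Type*} [CommRing A] {n : ℕ} (aa : Fin n → A)
    (e q : ℕ) (f : KoszulDeg A n q) : KoszulDeg A n q :=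
  fun s => (∏ k ∈ s.val, aa k ^ e) * f s

/-- A finite sequence `aa` in a commutative ring `A` is weakly proregular if for every
`q < 0` the inverse system of Koszul cohomologies `{H^q(K(A; aa^i))}_{i ∈ ℕ}` is
pro-zero: for each `i` there is `j ≥ i` such that every cocycle of `K(A; aa^j)` in
degree `q` becomes a coboundary in `K(A; aa^i)` after applying `μ_{j,i}`. -/
def IsWeaklyProregular {A : Type*} [CommRing A] {n : ℕ} (aa : Fin n → A) : Prop :=
  ∀ q i : ℕ, ∃ j : ℕ, i ≤ j ∧ ∀ f : KoszulDeg A n (q + 1),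
    koszulD (fun k => aa k ^ j) q f = 0 →
    ∃ g : KoszulDeg A n (q + 2),
      koszulD (fun k => aa k ^ i) (q + 1) g = koszulTransition aa (j - i) (q + 1) f

/-- An ideal is weakly proregular if it is generated by a weakly proregular finite
sequence. -/
def Ideal.IsWeaklyProregular {A : Type*} [CommRing A] (I : Ideal A) : Prop :=
  ∃ (n : ℕ) (aa : Fin n → A), Ideal.span (Set.range aa) = I ∧ _root_.IsWeaklyProregular aa

set_option linter.unusedSectionVars false

namespace WPR

variable {A : Type*} [CommRing A] {n : ℕ}

/-- extension of a Koszul cochain to all finsets -/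
noncomputable def extFn {m : ℕ} (f : KoszulDeg A n m) (t : Finset (Fin n)) : A :=
  if h : t.card = m then f ⟨t, h⟩ else 0

lemma extFn_eq {m : ℕ} (f : KoszulDeg A n m) (t : Finset (Fin n)) (h : t.card = m) :
    extFn f t = f ⟨t, h⟩ := dif_pos h

lemma koszulD_apply (aa : Fin n → A) (q : ℕ) (f : KoszulDeg A n (q + 1))
    (s : Finset (Fin n)) (hs : s.card = q) :
    koszulD aa q f ⟨s, hs⟩ =
      ∑ i ∈ sᶜ, (-1 : A) ^ (s.filter (fun k => k < i)).card * aa i * extFn f (insert i s) := by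
  rw [koszulD, ← Finset.sum_attach sᶜ
    (fun i => (-1 : A) ^ (s.filter (fun k => k < i)).card * aa i * extFn f (insert i s))]
  refine Finset.sum_congr rfl fun i _ => ?_
  rw [extFn_eq f (insert i.1 s)
    (by rw [Finset.card_insert_of_notMem (Finset.mem_compl.mp i.property), hs])]

lemma extFn_add {m : ℕ} (f g : KoszulDeg A n m) (t : Finset (Fin n)) :
    extFn (f + g) t = extFn f t + extFn g t := by
  unfold extFn; split
  · rfl
  · rw [add_zero]

lemma extFn_smul {m : ℕ} (c : A) (f : KoszulDeg A n m) (t : Finset (Fin n)) :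
    extFn (c • f) t = c * extFn f t := by
  unfold extFn; split
  · rfl
  · rw [mul_zero]

lemma koszulD_add (aa : Fin n → A) (q : ℕ) (f g : KoszulDeg A n (q + 1)) :
    koszulD aa q (f + g) = koszulD aa q f + koszulD aa q g := by
  funext ⟨s, hs⟩
  show _ = koszulD aa q f ⟨s, hs⟩ + koszulD aa q g ⟨s, hs⟩
  rw [koszulD_apply, koszulD_apply, koszulD_apply, ← Finset.sum_add_distrib]
  refine Finset.sum_congr rfl fun i _ => ?_
  rw [extFn_add, mul_add]

lemma koszulD_smul (aa : Fin n → A) (q : ℕ) (c : A) (f : KoszulDeg A n (q + 1)) :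
    koszulD aa q (c • f) = c • koszulD aa q f := by
  funext ⟨s, hs⟩
  show _ = c * koszulD aa q f ⟨s, hs⟩
  rw [koszulD_apply, koszulD_apply, Finset.mul_sum]
  refine Finset.sum_congr rfl fun i _ => ?_
  rw [extFn_smul]; ring

lemma extFn_transition (aa : Fin n → A) (e m : ℕ) (f : KoszulDeg A n m) (t : Finset (Fin n)) :
    extFn (koszulTransition aa e m f) t = (∏ k ∈ t, aa k ^ e) * extFn f t := by
  unfold extFn; split
  · rfl
  · rw [mul_zero]

lemma koszulTransition_apply (aa : Fin n → A) (e m : ℕ) (f : KoszulDeg A n m)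
    (s : Finset (Fin n)) (hs : s.card = m) :
    koszulTransition aa e m f ⟨s, hs⟩ = (∏ k ∈ s, aa k ^ e) * f ⟨s, hs⟩ := rfl

lemma koszulTransition_transition (aa : Fin n → A) (e e' m : ℕ) (f : KoszulDeg A n m) :
    koszulTransition aa e m (koszulTransition aa e' m f) = koszulTransition aa (e + e') m f := by
  funext s
  show (∏ k ∈ s.1, aa k ^ e) * ((∏ k ∈ s.1, aa k ^ e') * f s) = (∏ k ∈ s.1, aa k ^ (e + e')) * f s
  rw [← mul_assoc, ← Finset.prod_mul_distrib]
  congr 2; funext k; rw [← pow_add]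

lemma koszulTransition_smul (aa : Fin n → A) (e m : ℕ) (c : A) (f : KoszulDeg A n m) :
    koszulTransition aa e m (c • f) = c • koszulTransition aa e m f := by
  funext s
  show (∏ k ∈ s.1, aa k ^ e) * (c * f s) = c * ((∏ k ∈ s.1, aa k ^ e) * f s)
  ring

lemma koszulTransition_add (aa : Fin n → A) (e m : ℕ) (f g : KoszulDeg A n m) :
    koszulTransition aa e m (f + g) = koszulTransition aa e m f + koszulTransition aa e m g := by
  funext s
  show (∏ k ∈ s.1, aa k ^ e) * (f s + g s) = _ * f s + _ * g s
  ring

/-- the transition maps are chain maps -/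
lemma koszulD_transition (aa : Fin n → A) (e i0 q : ℕ) (f : KoszulDeg A n (q + 1)) :
    koszulD (fun k => aa k ^ i0) q (koszulTransition aa e (q + 1) f) =
      koszulTransition aa e q (koszulD (fun k => aa k ^ (i0 + e)) q f) := by
  funext ⟨s, hs⟩
  rw [koszulD_apply, koszulTransition_apply, koszulD_apply, Finset.mul_sum]
  refine Finset.sum_congr rfl fun i hi => ?_
  rw [extFn_transition, Finset.prod_insert (Finset.mem_compl.mp hi)]
  rw [add_comm i0 e, pow_add]
  ring


/-- push a finset of `Fin n` up to `Fin (n+1)` -/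
def up (s : Finset (Fin n)) : Finset (Fin (n + 1)) := s.map Fin.castSuccEmb

lemma mem_up {s : Finset (Fin n)} {k : Fin n} : k.castSucc ∈ up s ↔ k ∈ s :=
  Finset.mem_map' _

lemma last_not_mem_up (s : Finset (Fin n)) : Fin.last n ∉ up s := by
  intro h
  obtain ⟨k, -, hk⟩ := Finset.mem_map.mp h
  exact absurd hk (Fin.castSucc_lt_last k).ne

lemma card_up (s : Finset (Fin n)) : (up s).card = s.card := Finset.card_map _

lemma up_insert (k : Fin n) (s : Finset (Fin n)) :
    up (insert k s) = insert k.castSucc (up s) := Finset.map_insert _ _ _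

/-- pull a finset of `Fin (n+1)` down to `Fin n`, dropping `last n` -/
noncomputable def down (s : Finset (Fin (n + 1))) : Finset (Fin n) :=
  (s.erase (Fin.last n)).preimage Fin.castSucc (Fin.castSucc_injective n).injOn

lemma mem_down {s : Finset (Fin (n + 1))} {k : Fin n} :
    k ∈ down s ↔ k.castSucc ∈ s := by
  rw [down, Finset.mem_preimage, Finset.mem_erase]
  exact and_iff_right (Fin.castSucc_lt_last k).ne

lemma down_up (s : Finset (Fin n)) : down (up s) = s := by
  ext k; rw [mem_down, mem_up]

lemma up_down {s : Finset (Fin (n + 1))} (h : Fin.last n ∉ s) : up (down s) = s := by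
  ext x
  rcases Fin.eq_castSucc_or_eq_last x with ⟨k, rfl⟩ | rfl
  · rw [mem_up, mem_down]
  · simp only [last_not_mem_up, h]

lemma down_insert_last (s : Finset (Fin (n + 1))) : down (insert (Fin.last n) s) = down s := by
  ext k
  rw [mem_down, mem_down, Finset.mem_insert]
  exact or_iff_right (Fin.castSucc_lt_last k).ne

lemma up_down_of_mem {s : Finset (Fin (n + 1))} (h : Fin.last n ∈ s) :
    insert (Fin.last n) (up (down s)) = s := by
  ext x
  rcases Fin.eq_castSucc_or_eq_last x with ⟨k, rfl⟩ | rfl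
  · rw [Finset.mem_insert, mem_up, mem_down]
    exact or_iff_right (Fin.castSucc_lt_last k).ne
  · simp only [Finset.mem_insert_self, h]

lemma compl_up (s : Finset (Fin n)) : (up s)ᶜ = insert (Fin.last n) (up sᶜ) := by
  ext x
  rcases Fin.eq_castSucc_or_eq_last x with ⟨k, rfl⟩ | rfl
  · rw [Finset.mem_compl, mem_up, Finset.mem_insert, ← Finset.mem_compl, mem_up]
    exact (or_iff_right (Fin.castSucc_lt_last k).ne).symm
  · simp [last_not_mem_up s]

lemma compl_insert_last_up (s : Finset (Fin n)) :
    (insert (Fin.last n) (up s))ᶜ = up sᶜ := by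
  ext x
  rcases Fin.eq_castSucc_or_eq_last x with ⟨k, rfl⟩ | rfl
  · rw [Finset.mem_compl, Finset.mem_insert, mem_up, mem_up, Finset.mem_compl]
    simp [(Fin.castSucc_lt_last k).ne]
  · simp [last_not_mem_up sᶜ]

lemma filter_lt_castSucc (s : Finset (Fin n)) (k : Fin n) :
    (up s).filter (fun x => x < k.castSucc) = up (s.filter (fun x => x < k)) := by
  rw [up, up, Finset.filter_map]
  congr 1

lemma filter_lt_last (s : Finset (Fin n)) :
    (up s).filter (fun x => x < Fin.last n) = up s :=
  Finset.filter_true_of_mem fun x hx => by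
    obtain ⟨k, -, rfl⟩ := Finset.mem_map.mp hx
    exact Fin.castSucc_lt_last k



/-- restriction to subsets not containing `last n` -/
noncomputable def res0 {q : ℕ} (f : KoszulDeg A (n + 1) q) : KoszulDeg A n q :=
  fun s => f ⟨up s.1, by rw [card_up, s.2]⟩

/-- restriction to subsets containing `last n` -/
noncomputable def res1 {q : ℕ} (f : KoszulDeg A (n + 1) (q + 1)) : KoszulDeg A n q :=
  fun s => f ⟨insert (Fin.last n) (up s.1), by
    rw [Finset.card_insert_of_notMem (last_not_mem_up s.1), card_up, s.2]⟩

lemma res0_apply {q : ℕ} (f : KoszulDeg A (n + 1) q) (s : Finset (Fin n)) (hs : s.card = q) :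
    res0 f ⟨s, hs⟩ = f ⟨up s, by rw [card_up, hs]⟩ := rfl

lemma res1_apply {q : ℕ} (f : KoszulDeg A (n + 1) (q + 1)) (s : Finset (Fin n))
    (hs : s.card = q) :
    res1 f ⟨s, hs⟩ = f ⟨insert (Fin.last n) (up s), by
      rw [Finset.card_insert_of_notMem (last_not_mem_up s), card_up, hs]⟩ := rfl

lemma extFn_up {q : ℕ} (f : KoszulDeg A (n + 1) q) (t : Finset (Fin n)) :
    extFn f (up t) = extFn (res0 f) t := by
  unfold extFn
  by_cases h : t.card = q
  · rw [dif_pos h, dif_pos (by rw [card_up, h])]; rfl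
  · rw [dif_neg h, dif_neg (by rw [card_up]; exact h)]

lemma extFn_insert_up {q : ℕ} (f : KoszulDeg A (n + 1) (q + 1)) (t : Finset (Fin n)) :
    extFn f (insert (Fin.last n) (up t)) = extFn (res1 f) t := by
  unfold extFn
  by_cases h : t.card = q
  · rw [dif_pos h, dif_pos (by
      rw [Finset.card_insert_of_notMem (last_not_mem_up t), card_up, h])]
    rfl
  · rw [dif_neg h, dif_neg (by
      rw [Finset.card_insert_of_notMem (last_not_mem_up t), card_up]
      exact fun hc => h (Nat.succ_injective hc))]

lemma prod_up {M : Type*} [CommMonoid M] (t : Finset (Fin n)) (F : Fin (n + 1) → M) :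
    ∏ x ∈ up t, F x = ∏ k ∈ t, F k.castSucc := by
  rw [up, Finset.prod_map]; rfl

lemma sum_up {M : Type*} [AddCommMonoid M] (t : Finset (Fin n)) (F : Fin (n + 1) → M) :
    ∑ x ∈ up t, F x = ∑ k ∈ t, F k.castSucc := by
  rw [up, Finset.sum_map]; rfl

/-- extensionality via the two restrictions -/
lemma koszul_ext {q : ℕ} {u v : KoszulDeg A (n + 1) (q + 1)}
    (h0 : res0 u = res0 v) (h1 : res1 u = res1 v) : u = v := by
  funext ⟨s, hs⟩
  by_cases hL : Fin.last n ∈ s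
  · have hc : (down s).card = q := by
      have h2 : (insert (Fin.last n) (up (down s))).card = q + 1 := by
        rw [up_down_of_mem hL, hs]
      rw [Finset.card_insert_of_notMem (last_not_mem_up _), card_up] at h2
      exact Nat.succ_injective h2
    have e : (⟨s, hs⟩ : {s : Finset (Fin (n+1)) // s.card = q + 1}) =
        ⟨insert (Fin.last n) (up (down s)), by rw [up_down_of_mem hL, hs]⟩ :=
      Subtype.ext (up_down_of_mem hL).symm
    rw [e]
    exact congrFun h1 ⟨down s, hc⟩
  · have hc : (down s).card = q + 1 := by rw [← card_up, up_down hL, hs]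
    have e : (⟨s, hs⟩ : {s : Finset (Fin (n+1)) // s.card = q + 1}) =
        ⟨up (down s), by rw [up_down hL, hs]⟩ := Subtype.ext (up_down hL).symm
    rw [e]
    exact congrFun h0 ⟨down s, hc⟩

/-- gluing -/
noncomputable def combine {q : ℕ} (g0 : KoszulDeg A n (q + 1)) (g1 : KoszulDeg A n q) :
    KoszulDeg A (n + 1) (q + 1) :=
  fun s => if Fin.last n ∈ s.1 then extFn g1 (down s.1) else extFn g0 (down s.1)

lemma res0_combine {q : ℕ} (g0 : KoszulDeg A n (q + 1)) (g1 : KoszulDeg A n q) :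
    res0 (combine g0 g1) = g0 := by
  funext ⟨s, hs⟩
  show (if _ then _ else _) = _
  rw [if_neg (last_not_mem_up s), down_up, extFn_eq g0 s hs]

lemma res1_combine {q : ℕ} (g0 : KoszulDeg A n (q + 1)) (g1 : KoszulDeg A n q) :
    res1 (combine g0 g1) = g1 := by
  funext ⟨s, hs⟩
  show (if _ then _ else _) = _
  rw [if_pos (Finset.mem_insert_self _ _), down_insert_last, down_up, extFn_eq g1 s hs]

/-- the main splitting of the differential, part 0 -/
lemma res0_koszulD (bb : Fin (n + 1) → A) (q : ℕ) (f : KoszulDeg A (n + 1) (q + 1)) :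
    res0 (koszulD bb q f) =
      koszulD (fun k => bb k.castSucc) q (res0 f) +
        ((-1 : A) ^ q * bb (Fin.last n)) • res1 f := by
  funext ⟨s, hs⟩
  simp only [Pi.add_apply, Pi.smul_apply, smul_eq_mul, res0_apply]
  rw [koszulD_apply bb q f (up s) (by rw [card_up, hs]),
    koszulD_apply (fun k => bb k.castSucc) q (res0 f) s hs,
    compl_up, Finset.sum_insert (last_not_mem_up sᶜ), sum_up, add_comm]
  congr 1
  · refine Finset.sum_congr rfl fun k _ => ?_
    rw [filter_lt_castSucc, card_up, ← up_insert, extFn_up]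
  · rw [filter_lt_last, card_up, hs, extFn_insert_up, extFn_eq (res1 f) s hs]

/-- the main splitting of the differential, part 1 -/
lemma res1_koszulD (bb : Fin (n + 1) → A) (q : ℕ) (f : KoszulDeg A (n + 1) (q + 2)) :
    res1 (koszulD bb (q + 1) f) = koszulD (fun k => bb k.castSucc) q (res1 f) := by
  funext ⟨s, hs⟩
  simp only [res1_apply]
  rw [koszulD_apply bb (q + 1) f (insert (Fin.last n) (up s)) (by
      rw [Finset.card_insert_of_notMem (last_not_mem_up s), card_up, hs]),
    koszulD_apply (fun k => bb k.castSucc) q (res1 f) s hs,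
    compl_insert_last_up, sum_up]
  refine Finset.sum_congr rfl fun k _ => ?_
  rw [Finset.filter_insert, if_neg (not_lt.mpr (Fin.castSucc_lt_last k).le),
    filter_lt_castSucc, card_up,
    Finset.insert_comm, ← up_insert, extFn_insert_up]

/-- transition splitting, part 0 -/
lemma res0_transition (bb : Fin (n + 1) → A) (e q : ℕ) (f : KoszulDeg A (n + 1) q) :
    res0 (koszulTransition bb e q f) =
      koszulTransition (fun k => bb k.castSucc) e q (res0 f) := by
  funext ⟨s, hs⟩
  simp only [res0_apply]
  rw [koszulTransition_apply, koszulTransition_apply, res0_apply, prod_up]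

/-- transition splitting, part 1 -/
lemma res1_transition (bb : Fin (n + 1) → A) (e q : ℕ) (f : KoszulDeg A (n + 1) (q + 1)) :
    res1 (koszulTransition bb e (q + 1) f) =
      (bb (Fin.last n) ^ e) • koszulTransition (fun k => bb k.castSucc) e q (res1 f) := by
  funext ⟨s, hs⟩
  simp only [res1_apply, Pi.smul_apply, smul_eq_mul]
  rw [koszulTransition_apply, koszulTransition_apply, res1_apply,
    Finset.prod_insert (last_not_mem_up s), prod_up, mul_assoc]



lemma chase (bb : Fin (n + 1) → A) (q i i2 j p : ℕ)
    (hii2 : i ≤ i2) (hi2p : i2 ≤ p) (hpj : p ≤ j)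
    (H2 : ∀ w : KoszulDeg A n (q + 1),
      koszulD (fun k => bb k.castSucc ^ i2) q w = 0 →
      ∃ g0 : KoszulDeg A n (q + 2),
        koszulD (fun k => bb k.castSucc ^ i) (q + 1) g0 =
          koszulTransition (fun k => bb k.castSucc) (i2 - i) (q + 1) w)
    (f : KoszulDeg A (n + 1) (q + 1))
    (hf : koszulD (fun k => bb k ^ j) q f = 0)
    (h' : KoszulDeg A n (q + 1))
    (Eh' : koszulD (fun k => bb k.castSucc ^ i2) q h' =
      (bb (Fin.last n) ^ (j - p)) •
        koszulTransition (fun k => bb k.castSucc) (j - i2) q (res1 f)) :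
    ∃ g : KoszulDeg A (n + 1) (q + 2),
      koszulD (fun k => bb k ^ i) (q + 1) g = koszulTransition bb (j - i) (q + 1) f := by
  have e1 : i2 + (j - i2) = j := by omega
  have e2 : i + (i2 - i) = i2 := by omega
  have e3 : (i2 - i) + (j - i2) = j - i := by omega
  have e4 : (p - i) + (j - p) = j - i := by omega
  have e5 : p + (j - p) = j := by omega
  have e6 : i + (p - i) = p := by omega
  have E0 : koszulD (fun k => bb k.castSucc ^ j) q (res0 f) +
      ((-1 : A) ^ q * bb (Fin.last n) ^ j) • res1 f = 0 := by
    have h := congrArg res0 hf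
    rw [res0_koszulD] at h
    exact h
  have Ed : koszulD (fun k => bb k.castSucc ^ j) q (res0 f) =
      (-((-1 : A) ^ q * bb (Fin.last n) ^ j)) • res1 f := by
    have h := eq_neg_of_add_eq_zero_left E0
    rwa [← neg_smul] at h
  have Ew : koszulD (fun k => bb k.castSucc ^ i2) q
      (koszulTransition (fun k => bb k.castSucc) (j - i2) (q + 1) (res0 f) +
        ((-1 : A) ^ q * bb (Fin.last n) ^ p) • h') = 0 := by
    rw [koszulD_add, koszulD_smul, koszulD_transition, e1, Ed, Eh',
      koszulTransition_smul, smul_smul, mul_assoc ((-1 : A) ^ q), ← pow_add, e5,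
      neg_smul, neg_add_cancel]
  obtain ⟨g0, Eg0⟩ := H2 _ Ew
  have Eg1 : koszulD (fun k => bb k.castSucc ^ i) q
      ((bb (Fin.last n) ^ (p - i)) •
        koszulTransition (fun k => bb k.castSucc) (i2 - i) (q + 1) h') =
      (bb (Fin.last n) ^ (j - i)) •
        koszulTransition (fun k => bb k.castSucc) (j - i) q (res1 f) := by
    rw [koszulD_smul, koszulD_transition, e2, Eh', koszulTransition_smul,
      koszulTransition_transition, e3, smul_smul, ← pow_add, e4]
  refine ⟨combine g0 ((bb (Fin.last n) ^ (p - i)) •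
      koszulTransition (fun k => bb k.castSucc) (i2 - i) (q + 1) h'), koszul_ext ?_ ?_⟩
  · rw [res0_koszulD, res0_combine, res1_combine, res0_transition, Eg0,
      koszulTransition_add, koszulTransition_transition, e3, koszulTransition_smul,
      smul_smul]
    have hsc : (-1 : A) ^ (q + 1) * bb (Fin.last n) ^ i * bb (Fin.last n) ^ (p - i) =
        -((-1 : A) ^ q * bb (Fin.last n) ^ p) := by
      rw [pow_succ, mul_assoc ((-1 : A) ^ q * -1), ← pow_add, e6]
      ring
    rw [hsc, neg_smul, add_neg_cancel_right]
  · rw [res1_koszulD, res1_combine, res1_transition, Eg1]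



lemma main (A : Type*) [CommRing A] [IsNoetherianRing A] :
    ∀ (n : ℕ) (aa : Fin n → A), IsWeaklyProregular aa := by
  intro n
  induction n with
  | zero =>
    intro aa q i
    refine ⟨i, le_rfl, fun f _ => ⟨0, funext fun s => absurd s.2 ?_⟩⟩
    have h0 : (s.1).card ≤ 0 := le_trans (Finset.card_le_univ s.1) (by simp)
    omega
  | succ n IH =>
    intro bb q i
    obtain ⟨i2, hii2, H2⟩ := IH (fun k => bb k.castSucc) q i
    rcases q with _ | q'
    · -- q = 0 : the Noetherian colon-ideal stabilization argument
      set I : Ideal A := Ideal.span (Set.range fun k : Fin n => bb k.castSucc ^ i2) with hI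
      have mono : Monotone fun t => Submodule.comap
          (LinearMap.lsmul A A (bb (Fin.last n) ^ t)) I := by
        intro t t' htt' x hx
        simp only [Submodule.mem_comap, LinearMap.lsmul_apply] at hx ⊢
        have : bb (Fin.last n) ^ t' • x =
            bb (Fin.last n) ^ (t' - t) • (bb (Fin.last n) ^ t • x) := by
          rw [smul_smul, ← pow_add]
          congr 2
          omega
        rw [this]
        exact Submodule.smul_mem _ _ hx
      obtain ⟨t0, ht0⟩ := monotone_stabilizes_iff_noetherian.mpr
        (isNoetherianRing_iff.mp ‹_›)
        ⟨fun t => Submodule.comap (LinearMap.lsmul A A (bb (Fin.last n) ^ t)) I, mono⟩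
      refine ⟨i2 + t0, by omega, ?_⟩
      intro f hf
      have E0 : koszulD (fun k => bb k.castSucc ^ (i2 + t0)) 0 (res0 f) +
          ((-1 : A) ^ 0 * bb (Fin.last n) ^ (i2 + t0)) • res1 f = 0 := by
        have h := congrArg res0 hf
        rw [res0_koszulD] at h
        exact h
      have E0e := congrFun E0 ⟨∅, Finset.card_empty⟩
      rw [Pi.add_apply, Pi.smul_apply, smul_eq_mul,
        koszulD_apply _ 0 (res0 f) ∅ Finset.card_empty, Pi.zero_apply] at E0e
      simp only [Finset.filter_empty, Finset.card_empty, pow_zero, one_mul] at E0e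
      have hmem : bb (Fin.last n) ^ (i2 + t0) * res1 f ⟨∅, Finset.card_empty⟩ ∈ I := by
        rw [eq_neg_of_add_eq_zero_right E0e]
        refine Submodule.neg_mem _ (Submodule.sum_mem _ fun k _ => ?_)
        rw [pow_add, mul_assoc]
        exact Ideal.mul_mem_right _ _ (Ideal.subset_span ⟨k, rfl⟩)
      have hJ : res1 f ⟨∅, Finset.card_empty⟩ ∈
          Submodule.comap (LinearMap.lsmul A A (bb (Fin.last n) ^ (i2 + t0))) I := by
        simp only [Submodule.mem_comap, LinearMap.lsmul_apply, smul_eq_mul]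
        exact hmem
      have hJ0 : bb (Fin.last n) ^ t0 * res1 f ⟨∅, Finset.card_empty⟩ ∈ I := by
        have heq := ht0 (i2 + t0) (by omega)
        have : res1 f ⟨∅, Finset.card_empty⟩ ∈
            Submodule.comap (LinearMap.lsmul A A (bb (Fin.last n) ^ t0)) I := by
          rw [show (Submodule.comap (LinearMap.lsmul A A (bb (Fin.last n) ^ t0)) I) =
            (⟨fun t => Submodule.comap (LinearMap.lsmul A A (bb (Fin.last n) ^ t)) I,
              mono⟩ : ℕ →o Ideal A) t0 from rfl, heq]
          exact hJ
        simpa only [Submodule.mem_comap, LinearMap.lsmul_apply, smul_eq_mul] using this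
      obtain ⟨co, hco⟩ := (Submodule.mem_span_range_iff_exists_fun A).mp hJ0
      simp only [smul_eq_mul] at hco
      have hEh : koszulD (fun k => bb k.castSucc ^ i2) 0 (fun s => ∑ k ∈ s.1, co k) =
          (bb (Fin.last n) ^ (i2 + t0 - i2)) • koszulTransition (fun k => bb k.castSucc)
            (i2 + t0 - i2) 0 (res1 f) := by
        have ht : i2 + t0 - i2 = t0 := by omega
        rw [ht]
        funext ⟨s, hs⟩
        have hse : s = ∅ := Finset.card_eq_zero.mp hs
        subst hse
        rw [koszulD_apply _ 0 _ ∅ hs, Pi.smul_apply, smul_eq_mul, koszulTransition_apply]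
        simp only [Finset.filter_empty, Finset.card_empty, pow_zero, one_mul,
          Finset.prod_empty, Finset.compl_empty]
        have hx : res1 f ⟨∅, hs⟩ = res1 f ⟨∅, Finset.card_empty⟩ := rfl
        rw [hx, ← hco]
        refine Finset.sum_congr rfl fun k _ => ?_
        rw [extFn_eq _ (insert k ∅) (by rw [Finset.card_insert_of_notMem
          (Finset.notMem_empty k), Finset.card_empty])]
        show bb k.castSucc ^ i2 * (∑ m ∈ insert k ∅, co m) = co k * bb k.castSucc ^ i2
        rw [Finset.sum_insert (Finset.notMem_empty k), Finset.sum_empty, add_zero,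
          mul_comm]
      exact chase bb 0 i i2 (i2 + t0) i2 hii2 le_rfl (by omega) H2 f hf _ hEh
    · -- q = q' + 1 : use the inductive hypothesis one degree lower
      obtain ⟨j, hi2j, H1⟩ := IH (fun k => bb k.castSucc) q' i2
      refine ⟨j, by omega, ?_⟩
      intro f hf
      have E1 : koszulD (fun k => bb k.castSucc ^ j) q' (res1 f) = 0 := by
        have h := congrArg res1 hf
        rw [res1_koszulD] at h
        exact h
      obtain ⟨h', Eh0⟩ := H1 (res1 f) E1
      refine chase bb (q' + 1) i i2 j j hii2 hi2j le_rfl H2 f hf h' ?_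
      rw [Nat.sub_self, pow_zero, one_smul]
      exact Eh0


end WPR

/-- If `A` is a noetherian commutative ring, then every finite sequence of elements
of `A` is weakly proregular. -/
theorem isWeaklyProregular_of_isNoetherianRing {A : Type*} [CommRing A]
    [IsNoetherianRing A] {n : ℕ} (aa : Fin n → A) :
    IsWeaklyProregular aa :=
  WPR.main A n aa
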